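/- Let α > 0, let κ > 1, let m : [0,α] → ℝ be continuous, and let Φ(ζ) = ζ^κ m(ζ) for ζ ∈ (0,α]. Let G be the kernel associated with α and Φ, and define K(θ) = θ² (G(θ) + G(−θ)) for θ ∈ (0,1). Then θ (G(θ) + G(−θ)) → 0 as θ → 0⁺; consequently K extends continuously to [0,1) with K(0) = 0, and this extension is differentiable at θ = 0 with K'(0) = 0. -/

import Mathlib

open MeasureTheory Set Filter Topology

/-- The kernel G associated with α and Φ:
G(θ) = (α/√π) ∫_{α|θ|}^{α} (ζ² - α²θ²)^{-1/2}
         exp(-α²ζ²(1-θ)²/(4(ζ² - α²θ²))) Φ(ζ)/ζ² dζ. -/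
noncomputable def kernelG (α : ℝ) (Φ : ℝ → ℝ) (θ : ℝ) : ℝ :=
  (α / Real.sqrt Real.pi) *
    ∫ ζ in (α * |θ|)..α,
      (1 / Real.sqrt (ζ ^ 2 - α ^ 2 * θ ^ 2)) *
        Real.exp (-(α ^ 2 * ζ ^ 2 * (1 - θ) ^ 2) / (4 * (ζ ^ 2 - α ^ 2 * θ ^ 2))) *
        (Φ ζ / ζ ^ 2)


lemma invsqrt_intervalIntegrable {a b : ℝ} (ha : 0 < a) (hab : a ≤ b) :
    IntervalIntegrable (fun ζ => 1 / Real.sqrt (ζ ^ 2 - a ^ 2)) volume a b := by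
  have hg : IntervalIntegrable (fun ζ => (1 / Real.sqrt (2 * a)) * (ζ - a) ^ (-(1/2) : ℝ))
      volume a b := by
    have h0 : IntervalIntegrable (fun x : ℝ => x ^ (-(1/2) : ℝ)) volume 0 (b - a) :=
      intervalIntegral.intervalIntegrable_rpow' (by norm_num)
    have := (h0.comp_sub_right a)
    simp only [zero_add, sub_add_cancel] at this
    exact this.const_mul _
  refine hg.mono_fun ?_ ?_
  · apply Measurable.aestronglyMeasurable
    fun_prop
  · have hIoc : Set.uIoc a b = Ioc a b := uIoc_of_le hab
    rw [hIoc]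
    refine (ae_restrict_iff' measurableSet_Ioc).mpr ?_
    filter_upwards with ζ hζ
    obtain ⟨h1, h2⟩ := hζ
    have hza : 0 < ζ - a := by linarith
    have h2a : (0:ℝ) < 2 * a := by linarith
    have key : Real.sqrt (2 * a * (ζ - a)) ≤ Real.sqrt (ζ ^ 2 - a ^ 2) := by
      apply Real.sqrt_le_sqrt; nlinarith
    have hpos : 0 < Real.sqrt (2 * a * (ζ - a)) := Real.sqrt_pos.mpr (by positivity)
    have hrw : (ζ - a) ^ (-(1/2) : ℝ) = 1 / Real.sqrt (ζ - a) := by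
      rw [Real.rpow_neg hza.le, Real.sqrt_eq_rpow]; norm_num
    rw [Real.norm_eq_abs, Real.norm_eq_abs, hrw]
    rw [abs_of_nonneg (by positivity), abs_of_nonneg (by positivity)]
    rw [div_mul_div_comm, one_mul, ← Real.sqrt_mul h2a.le]
    exact one_div_le_one_div_of_le hpos key

lemma invsqrt_integral {a b : ℝ} (ha : 0 < a) (hab : a ≤ b) :
    ∫ ζ in a..b, 1 / Real.sqrt (ζ ^ 2 - a ^ 2)
      = Real.log (b + Real.sqrt (b ^ 2 - a ^ 2)) - Real.log a := by
  have hF : ∀ ζ ∈ Ioo a b, HasDerivAt (fun x => Real.log (x + Real.sqrt (x ^ 2 - a ^ 2)))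
      (1 / Real.sqrt (ζ ^ 2 - a ^ 2)) ζ := by
    intro ζ hζ
    have hz : 0 < ζ := lt_of_le_of_lt ha.le hζ.1
    have hs : 0 < ζ ^ 2 - a ^ 2 := by nlinarith [hζ.1]
    have hsq : 0 < Real.sqrt (ζ ^ 2 - a ^ 2) := Real.sqrt_pos.mpr hs
    have hin : HasDerivAt (fun x : ℝ => x ^ 2 - a ^ 2) (2 * ζ) ζ := by
      simpa using (hasDerivAt_pow 2 ζ).sub_const (a ^ 2)
    have hsqrt : HasDerivAt (fun x => Real.sqrt (x ^ 2 - a ^ 2))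
        (1 / (2 * Real.sqrt (ζ ^ 2 - a ^ 2)) * (2 * ζ)) ζ :=
      (Real.hasDerivAt_sqrt hs.ne').comp ζ hin
    have hsum : HasDerivAt (fun x => x + Real.sqrt (x ^ 2 - a ^ 2))
        (1 + 1 / (2 * Real.sqrt (ζ ^ 2 - a ^ 2)) * (2 * ζ)) ζ :=
      (hasDerivAt_id ζ).add hsqrt
    have hne : ζ + Real.sqrt (ζ ^ 2 - a ^ 2) ≠ 0 := by positivity
    have := hsum.log hne
    convert this using 1
    have h1 : Real.sqrt (ζ ^ 2 - a ^ 2) * Real.sqrt (ζ ^ 2 - a ^ 2) = ζ ^ 2 - a ^ 2 :=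
      Real.mul_self_sqrt hs.le
    field_simp
    nlinarith [h1]
  have hcont : ContinuousOn (fun x => Real.log (x + Real.sqrt (x ^ 2 - a ^ 2))) (Icc a b) := by
    apply ContinuousOn.log
    · fun_prop
    · intro x hx
      have : 0 < x := lt_of_lt_of_le ha hx.1
      positivity
  have := intervalIntegral.integral_eq_sub_of_hasDeriv_right_of_le hab hcont
    (fun x hx => (hF x hx).hasDerivWithinAt) (invsqrt_intervalIntegrable ha hab)
  rw [this]
  congr 1
  rw [show a ^ 2 - a ^ 2 = 0 by ring, Real.sqrt_zero, add_zero]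

lemma kernelG_abs_le (α κ M : ℝ) (hα : 0 < α) (m : ℝ → ℝ)
    (hM : ∀ ζ ∈ Icc 0 α, |m ζ| ≤ M) {θ t : ℝ} (hθ : θ ∈ Ioo (0:ℝ) 1) (ht : |t| = θ) :
    |kernelG α (fun ζ => ζ ^ κ * m ζ) t| ≤
      (α / Real.sqrt Real.pi) *
        ((M * ((α * θ) ^ (κ - 2) + α ^ (κ - 2))) *
          (Real.log (2 * α) - Real.log (α * θ))) := by
  obtain ⟨hθ0, hθ1⟩ := hθ
  have hM0 : 0 ≤ M := le_trans (abs_nonneg _) (hM 0 ⟨le_refl _, hα.le⟩)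
  have ht2 : t ^ 2 = θ ^ 2 := by rw [← sq_abs, ht]
  have ha : 0 < α * θ := by positivity
  have hab : α * θ ≤ α := by nlinarith
  have hC0 : 0 ≤ M * ((α * θ) ^ (κ - 2) + α ^ (κ - 2)) := by
    have := Real.rpow_nonneg ha.le (κ - 2)
    have := Real.rpow_nonneg hα.le (κ - 2)
    positivity
  set C := M * ((α * θ) ^ (κ - 2) + α ^ (κ - 2)) with hCdef
  rw [kernelG, ht, abs_mul, abs_of_nonneg (by positivity : (0:ℝ) ≤ α / Real.sqrt Real.pi)]
  have key : |∫ ζ in (α * θ)..α,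
      (1 / Real.sqrt (ζ ^ 2 - α ^ 2 * t ^ 2)) *
        Real.exp (-(α ^ 2 * ζ ^ 2 * (1 - t) ^ 2) / (4 * (ζ ^ 2 - α ^ 2 * t ^ 2))) *
        ((ζ ^ κ * m ζ) / ζ ^ 2)|
      ≤ C * (Real.log (2 * α) - Real.log (α * θ)) := by
    have hbd : ∀ᵐ ζ ∂(volume.restrict (Set.uIoc (α * θ) α)),
        ‖(1 / Real.sqrt (ζ ^ 2 - α ^ 2 * t ^ 2)) *
          Real.exp (-(α ^ 2 * ζ ^ 2 * (1 - t) ^ 2) / (4 * (ζ ^ 2 - α ^ 2 * t ^ 2))) *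
          ((ζ ^ κ * m ζ) / ζ ^ 2)‖ ≤ C * (1 / Real.sqrt (ζ ^ 2 - (α * θ) ^ 2)) := by
      rw [uIoc_of_le hab]
      refine (ae_restrict_iff' measurableSet_Ioc).mpr ?_
      filter_upwards with ζ hζ
      obtain ⟨hζ1, hζ2⟩ := hζ
      have hζ0 : 0 < ζ := lt_trans ha hζ1
      have hrw : α ^ 2 * t ^ 2 = (α * θ) ^ 2 := by rw [ht2]; ring
      rw [hrw]
      have hs : 0 < ζ ^ 2 - (α * θ) ^ 2 := by nlinarith
      have hsq : 0 < Real.sqrt (ζ ^ 2 - (α * θ) ^ 2) := Real.sqrt_pos.mpr hs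
      have hexp : Real.exp (-(α ^ 2 * ζ ^ 2 * (1 - t) ^ 2) / (4 * (ζ ^ 2 - (α * θ) ^ 2))) ≤ 1 := by
        rw [Real.exp_le_one_iff]
        apply div_nonpos_of_nonpos_of_nonneg
        · simp [neg_nonpos]; positivity
        · positivity
      have hpow : ζ ^ κ / ζ ^ 2 = ζ ^ (κ - 2) := by
        rw [show (ζ:ℝ) ^ (2:ℕ) = ζ ^ ((2:ℕ):ℝ) from (Real.rpow_natCast ζ 2).symm,
          ← Real.rpow_sub hζ0]
        norm_num
      have hpow_le : ζ ^ (κ - 2) ≤ (α * θ) ^ (κ - 2) + α ^ (κ - 2) := by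
        rcases le_or_gt 0 (κ - 2) with h | h
        · have : ζ ^ (κ - 2) ≤ α ^ (κ - 2) := Real.rpow_le_rpow hζ0.le (by nlinarith) h
          have h0 : (0:ℝ) ≤ (α * θ) ^ (κ - 2) := Real.rpow_nonneg ha.le _
          linarith
        · have : ζ ^ (κ - 2) ≤ (α * θ) ^ (κ - 2) :=
            Real.rpow_le_rpow_of_nonpos ha hζ1.le h.le
          have h0 : (0:ℝ) ≤ α ^ (κ - 2) := Real.rpow_nonneg hα.le _
          linarith
      have hmb : |m ζ| ≤ M := hM ζ ⟨hζ0.le, hζ2⟩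
      have e1 : |1 / Real.sqrt (ζ ^ 2 - (α * θ) ^ 2)| = 1 / Real.sqrt (ζ ^ 2 - (α * θ) ^ 2) :=
        abs_of_nonneg (by positivity)
      have e3 : |ζ ^ κ * m ζ / ζ ^ 2| = ζ ^ κ * |m ζ| / ζ ^ 2 := by
        rw [abs_div, abs_mul, abs_of_nonneg (Real.rpow_nonneg hζ0.le κ),
          abs_of_nonneg (by positivity : (0:ℝ) ≤ ζ ^ 2)]
      rw [Real.norm_eq_abs, abs_mul, abs_mul, e1, e3, abs_of_nonneg (Real.exp_nonneg _)]
      calc 1 / Real.sqrt (ζ ^ 2 - (α * θ) ^ 2) *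
            Real.exp (-(α ^ 2 * ζ ^ 2 * (1 - t) ^ 2) / (4 * (ζ ^ 2 - (α * θ) ^ 2))) *
            (ζ ^ κ * |m ζ| / ζ ^ 2)
          ≤ 1 / Real.sqrt (ζ ^ 2 - (α * θ) ^ 2) * 1 *
            (((α * θ) ^ (κ - 2) + α ^ (κ - 2)) * M) := by
            apply mul_le_mul
            · apply mul_le_mul_of_nonneg_left hexp (by positivity)
            · rw [mul_div_right_comm, hpow]
              apply mul_le_mul hpow_le hmb (abs_nonneg _)
              · have h0 : (0:ℝ) ≤ (α * θ) ^ (κ - 2) := Real.rpow_nonneg ha.le _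
                have h1 : (0:ℝ) ≤ α ^ (κ - 2) := Real.rpow_nonneg hα.le _
                linarith
            · positivity
            · positivity
          _ = C * (1 / Real.sqrt (ζ ^ 2 - (α * θ) ^ 2)) := by rw [hCdef]; ring
    have hint : IntervalIntegrable (fun ζ => C * (1 / Real.sqrt (ζ ^ 2 - (α * θ) ^ 2)))
        volume (α * θ) α := (invsqrt_intervalIntegrable ha hab).const_mul C
    have h1 := intervalIntegral.norm_integral_le_abs_of_norm_le hbd hint
    rw [Real.norm_eq_abs] at h1
    refine h1.trans ?_
    rw [intervalIntegral.integral_const_mul, invsqrt_integral ha hab, abs_mul]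
    have hL0 : 0 ≤ Real.log (α + Real.sqrt (α ^ 2 - (α * θ) ^ 2)) - Real.log (α * θ) := by
      have : α * θ ≤ α + Real.sqrt (α ^ 2 - (α * θ) ^ 2) := by
        have := Real.sqrt_nonneg (α ^ 2 - (α * θ) ^ 2); linarith
      have := Real.log_le_log ha this
      linarith
    rw [abs_of_nonneg hC0, abs_of_nonneg hL0]
    apply mul_le_mul_of_nonneg_left _ hC0
    have hs : Real.sqrt (α ^ 2 - (α * θ) ^ 2) ≤ α := by
      have h := Real.sqrt_le_sqrt (show α ^ 2 - (α * θ) ^ 2 ≤ α ^ 2 by nlinarith)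
      rwa [Real.sqrt_sq hα.le] at h
    have : α + Real.sqrt (α ^ 2 - (α * θ) ^ 2) ≤ 2 * α := by linarith
    have := Real.log_le_log (by positivity) this
    linarith
  calc (α / Real.sqrt Real.pi) * |∫ ζ in (α * θ)..α,
        (1 / Real.sqrt (ζ ^ 2 - α ^ 2 * t ^ 2)) *
          Real.exp (-(α ^ 2 * ζ ^ 2 * (1 - t) ^ 2) / (4 * (ζ ^ 2 - α ^ 2 * t ^ 2))) *
          ((ζ ^ κ * m ζ) / ζ ^ 2)|
      ≤ (α / Real.sqrt Real.pi) * (C * (Real.log (2 * α) - Real.log (α * θ))) := by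
        apply mul_le_mul_of_nonneg_left key (by positivity)
    _ = _ := by rw [hCdef]

lemma kernelG_comp_continuousAt (α κ : ℝ) (hα : 0 < α) (m : ℝ → ℝ)
    (hm : ContinuousOn m (Icc 0 α)) {ε : ℝ} (hε : ε = 1 ∨ ε = -1)
    {θ₀ : ℝ} (hθ₀ : θ₀ ∈ Ioo (0:ℝ) 1) :
    ContinuousAt (fun θ => kernelG α (fun ζ => ζ ^ κ * m ζ) (ε * θ)) θ₀ := by
  obtain ⟨hθ₀0, hθ₀1⟩ := hθ₀
  obtain ⟨θl, hθl⟩ : ∃ x : ℝ, x = θ₀ / 2 := ⟨_, rfl⟩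
  obtain ⟨θh, hθh⟩ : ∃ x : ℝ, x = (1 + θ₀) / 2 := ⟨_, rfl⟩
  have hθl0 : 0 < θl := by rw [hθl]; positivity
  have hθlθ : θl < θ₀ := by rw [hθl]; linarith
  have hθθh : θ₀ < θh := by rw [hθh]; linarith
  have hθh1 : θh < 1 := by rw [hθh]; linarith
  have habs : ∀ θ : ℝ, 0 < θ → α * |ε * θ| = α * θ := by
    intro θ hθ
    rcases hε with rfl | rfl
    · rw [one_mul, abs_of_pos hθ]
    · rw [neg_one_mul, abs_neg, abs_of_pos hθ]
  have hee : ∀ θ : ℝ, α ^ 2 * (ε * θ) ^ 2 = (α * θ) ^ 2 := by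
    intro θ; rcases hε with rfl | rfl <;> ring
  obtain ⟨M, hM⟩ := isCompact_Icc.exists_bound_of_continuousOn hm
  have hM0 : 0 ≤ M := le_trans (norm_nonneg _) (hM 0 ⟨le_refl _, hα.le⟩)
  obtain ⟨N₀, hN₀def⟩ : ∃ x : ℝ, x = α ^ 2 * (α * θl) ^ 2 * (1 - θh) ^ 2 := ⟨_, rfl⟩
  have hN₀ : 0 < N₀ := by
    rw [hN₀def]
    exact mul_pos (mul_pos (pow_pos hα 2) (pow_pos (mul_pos hα hθl0) 2))
      (pow_pos (by linarith : (0:ℝ) < 1 - θh) 2)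
  obtain ⟨Cz, hCz⟩ : ∃ x : ℝ, x = (α * θl) ^ (κ - 2) + α ^ (κ - 2) := ⟨_, rfl⟩
  have hCz0 : 0 ≤ Cz := by
    have h1 := Real.rpow_nonneg (by positivity : (0:ℝ) ≤ α * θl) (κ - 2)
    have h2 := Real.rpow_nonneg hα.le (κ - 2)
    rw [hCz]; linarith
  obtain ⟨B, hB⟩ : ∃ x : ℝ, x = 4 * α / N₀ * (Cz * M) := ⟨_, rfl⟩
  have hB0 : 0 ≤ B := by
    rw [hB]
    exact mul_nonneg (div_nonneg (by positivity) hN₀.le) (mul_nonneg hCz0 hM0)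
  obtain ⟨f, hf⟩ : ∃ g : ℝ → ℝ → ℝ, g = fun θ ζ =>
      (1 / Real.sqrt (ζ ^ 2 - α ^ 2 * (ε * θ) ^ 2)) *
        Real.exp (-(α ^ 2 * ζ ^ 2 * (1 - ε * θ) ^ 2) / (4 * (ζ ^ 2 - α ^ 2 * (ε * θ) ^ 2))) *
        ((ζ ^ κ * m ζ) / ζ ^ 2) := ⟨_, rfl⟩
  obtain ⟨F, hF⟩ : ∃ g : ℝ → ℝ → ℝ, g = fun θ => (Ioc (α * θ) α).indicator (f θ) := ⟨_, rfl⟩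
  -- rewriting the kernel as an integral with fixed endpoints
  have hFeq : ∀ θ ∈ Ioo (0:ℝ) 1, kernelG α (fun ζ => ζ ^ κ * m ζ) (ε * θ)
      = (α / Real.sqrt Real.pi) * ∫ ζ in (0:ℝ)..α, F θ ζ := by
    intro θ hθ
    have h0ab : (0:ℝ) ≤ α * θ := (mul_pos hα hθ.1).le
    have hab : α * θ ≤ α := by nlinarith [hθ.1, hθ.2]
    rw [kernelG, habs θ hθ.1]
    congr 1
    rw [intervalIntegral.integral_of_le hab, intervalIntegral.integral_of_le hα.le]
    simp only [hF, hf]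
    rw [MeasureTheory.setIntegral_indicator measurableSet_Ioc]
    rw [Ioc_inter_Ioc, max_eq_right h0ab, min_self]
  -- the dominated convergence step
  have hFtendsto : Tendsto (fun θ => ∫ ζ in (0:ℝ)..α, F θ ζ) (𝓝 θ₀)
      (𝓝 (∫ ζ in (0:ℝ)..α, F θ₀ ζ)) := by
    have hmem : Ioo θl θh ∈ 𝓝 θ₀ := isOpen_Ioo.mem_nhds ⟨hθlθ, hθθh⟩
    apply intervalIntegral.tendsto_integral_filter_of_dominated_convergence (fun _ => B)
    · -- measurability
      filter_upwards [hmem] with θ hθ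
      have hθpos : 0 < θ := lt_trans hθl0 hθ.1
      rw [uIoc_of_le hα.le]
      simp only [hF, hf]
      rw [aestronglyMeasurable_indicator_iff measurableSet_Ioc]
      rw [Measure.restrict_restrict measurableSet_Ioc]
      have hsub : Ioc (α * θ) α ∩ Ioc 0 α = Ioc (α * θ) α := by
        rw [Ioc_inter_Ioc, min_self, max_eq_left (mul_pos hα hθpos).le]
      rw [hsub]
      apply ContinuousOn.aestronglyMeasurable _ measurableSet_Ioc
      have hpos : ∀ ζ ∈ Ioc (α * θ) α, 0 < ζ ^ 2 - α ^ 2 * (ε * θ) ^ 2 := by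
        intro ζ hζ
        rw [hee θ]
        have h1 : 0 < α * θ := by positivity
        nlinarith [hζ.1]
      have c1 : ContinuousOn (fun ζ : ℝ => 1 / Real.sqrt (ζ ^ 2 - α ^ 2 * (ε * θ) ^ 2))
          (Ioc (α * θ) α) := by
        apply ContinuousOn.div continuousOn_const
        · exact (Real.continuous_sqrt.comp (by fun_prop)).continuousOn
        · intro ζ hζ
          exact ne_of_gt (Real.sqrt_pos.mpr (hpos ζ hζ))
      have c2 : ContinuousOn (fun ζ : ℝ =>
          Real.exp (-(α ^ 2 * ζ ^ 2 * (1 - ε * θ) ^ 2) /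
            (4 * (ζ ^ 2 - α ^ 2 * (ε * θ) ^ 2)))) (Ioc (α * θ) α) := by
        apply Real.continuous_exp.comp_continuousOn
        apply ContinuousOn.div (by fun_prop) (by fun_prop)
        intro ζ hζ
        exact ne_of_gt (by linarith [hpos ζ hζ])
      have c3 : ContinuousOn (fun ζ : ℝ => (ζ ^ κ * m ζ) / ζ ^ 2) (Ioc (α * θ) α) := by
        apply ContinuousOn.div
        · apply ContinuousOn.mul
          · intro ζ hζ
            have hζ0 : 0 < ζ := lt_trans (by positivity) hζ.1
            exact (Real.continuousAt_rpow_const ζ κ (Or.inl hζ0.ne')).continuousWithinAt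
          · exact hm.mono (fun ζ hζ => ⟨le_of_lt (lt_trans (by positivity) hζ.1), hζ.2⟩)
        · fun_prop
        · intro ζ hζ
          have hζ0 : 0 < ζ := lt_trans (by positivity) hζ.1
          positivity
      exact (c1.mul c2).mul c3
    · -- uniform bound
      filter_upwards [hmem] with θ hθ
      filter_upwards with ζ hζmem
      have hθpos : 0 < θ := lt_trans hθl0 hθ.1
      by_cases hin : ζ ∈ Ioc (α * θ) α
      · simp only [hF, indicator_of_mem hin]
        obtain ⟨hζ1, hζ2⟩ := hin
        have hζ0 : 0 < ζ := lt_trans (by positivity) hζ1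
        have hrw := hee θ
        have hs : 0 < ζ ^ 2 - (α * θ) ^ 2 := by nlinarith [mul_pos hα hθpos, hζ1]
        have hsA : ζ ^ 2 - (α * θ) ^ 2 ≤ α ^ 2 := by nlinarith
        have hsq : 0 < Real.sqrt (ζ ^ 2 - (α * θ) ^ 2) := Real.sqrt_pos.mpr hs
        have hζl : α * θl < ζ := lt_trans (mul_lt_mul_of_pos_left hθ.1 hα) hζ1
        have hNbig : N₀ ≤ α ^ 2 * ζ ^ 2 * (1 - ε * θ) ^ 2 := by
          have hθh' : θ < θh := hθ.2
          have hsq1 : (1 - θh) ^ 2 ≤ (1 - ε * θ) ^ 2 := by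
            rcases hε with rfl | rfl
            · rw [one_mul]
              exact pow_le_pow_left₀ (by linarith) (by linarith) 2
            · rw [neg_one_mul, sub_neg_eq_add]
              exact pow_le_pow_left₀ (by linarith) (by linarith) 2
          have hz2 : (α * θl) ^ 2 ≤ ζ ^ 2 :=
            pow_le_pow_left₀ (mul_pos hα hθl0).le hζl.le 2
          rw [hN₀def]
          exact mul_le_mul (mul_le_mul_of_nonneg_left hz2 (sq_nonneg α)) hsq1
            (sq_nonneg _) (mul_nonneg (sq_nonneg _) (sq_nonneg _))
        have hN : 0 < α ^ 2 * ζ ^ 2 * (1 - ε * θ) ^ 2 := lt_of_lt_of_le hN₀ hNbig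
        have hexp : Real.exp (-(α ^ 2 * ζ ^ 2 * (1 - ε * θ) ^ 2) /
            (4 * (ζ ^ 2 - (α * θ) ^ 2))) ≤ 4 * (ζ ^ 2 - (α * θ) ^ 2) / N₀ := by
          set N := α ^ 2 * ζ ^ 2 * (1 - ε * θ) ^ 2
          set s := ζ ^ 2 - (α * θ) ^ 2
          have hs' : (0:ℝ) < s := hs
          have hx : 0 < N / (4 * s) := div_pos hN (by linarith)
          have h1 : Real.exp (-N / (4 * s)) ≤ (N / (4 * s))⁻¹ := by
            rw [neg_div, Real.exp_neg]
            apply inv_anti₀ hx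
            calc N / (4 * s) ≤ N / (4 * s) + 1 := by linarith
              _ ≤ Real.exp (N / (4 * s)) := Real.add_one_le_exp _
          have h2 : (N / (4 * s))⁻¹ = 4 * s / N := by
            rw [inv_div]
          rw [h2] at h1
          refine h1.trans ?_
          apply div_le_div_of_nonneg_left (by linarith : (0:ℝ) ≤ 4 * s) hN₀ hNbig
        have hpow : ζ ^ κ / ζ ^ 2 = ζ ^ (κ - 2) := by
          rw [show (ζ:ℝ) ^ (2:ℕ) = ζ ^ ((2:ℕ):ℝ) from (Real.rpow_natCast ζ 2).symm,
            ← Real.rpow_sub hζ0]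
          norm_num
        have hpow_le : ζ ^ (κ - 2) ≤ Cz := by
          rw [hCz]
          rcases le_or_gt 0 (κ - 2) with h | h
          · have : ζ ^ (κ - 2) ≤ α ^ (κ - 2) := Real.rpow_le_rpow hζ0.le hζ2 h
            have h0 : (0:ℝ) ≤ (α * θl) ^ (κ - 2) := Real.rpow_nonneg (by positivity) _
            linarith
          · have : ζ ^ (κ - 2) ≤ (α * θl) ^ (κ - 2) :=
              Real.rpow_le_rpow_of_nonpos (by positivity) hζl.le h.le
            have h0 : (0:ℝ) ≤ α ^ (κ - 2) := Real.rpow_nonneg hα.le _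
            linarith
        have hmb : |m ζ| ≤ M := hM ζ ⟨hζ0.le, hζ2⟩
        simp only [hf]
        rw [hrw]
        have e3 : |ζ ^ κ * m ζ / ζ ^ 2| = ζ ^ (κ - 2) * |m ζ| := by
          rw [abs_div, abs_mul, abs_of_nonneg (Real.rpow_nonneg hζ0.le κ),
            abs_of_nonneg (by positivity : (0:ℝ) ≤ ζ ^ 2), mul_div_right_comm, hpow]
        rw [Real.norm_eq_abs, abs_mul, abs_mul, e3,
          abs_of_nonneg (by positivity : (0:ℝ) ≤ 1 / Real.sqrt (ζ ^ 2 - (α * θ) ^ 2)),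
          abs_of_nonneg (Real.exp_nonneg _)]
        calc 1 / Real.sqrt (ζ ^ 2 - (α * θ) ^ 2) *
              Real.exp (-(α ^ 2 * ζ ^ 2 * (1 - ε * θ) ^ 2) / (4 * (ζ ^ 2 - (α * θ) ^ 2))) *
              (ζ ^ (κ - 2) * |m ζ|)
            ≤ 1 / Real.sqrt (ζ ^ 2 - (α * θ) ^ 2) *
              (4 * (ζ ^ 2 - (α * θ) ^ 2) / N₀) * (Cz * M) := by
              apply mul_le_mul
              · exact mul_le_mul_of_nonneg_left hexp (by positivity)
              · exact mul_le_mul hpow_le hmb (abs_nonneg _) hCz0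
              · exact mul_nonneg (Real.rpow_nonneg hζ0.le _) (abs_nonneg _)
              · exact mul_nonneg (by positivity)
                  (div_nonneg (by linarith) hN₀.le)
          _ = 4 / N₀ * ((ζ ^ 2 - (α * θ) ^ 2) / Real.sqrt (ζ ^ 2 - (α * θ) ^ 2)) * (Cz * M) := by
              ring
          _ = 4 / N₀ * Real.sqrt (ζ ^ 2 - (α * θ) ^ 2) * (Cz * M) := by
              rw [Real.div_sqrt]
          _ ≤ 4 / N₀ * α * (Cz * M) := by
              have hsl : Real.sqrt (ζ ^ 2 - (α * θ) ^ 2) ≤ α := by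
                have h := Real.sqrt_le_sqrt hsA
                rwa [Real.sqrt_sq hα.le] at h
              apply mul_le_mul_of_nonneg_right _ (mul_nonneg hCz0 hM0)
              apply mul_le_mul_of_nonneg_left hsl
                (div_nonneg (by norm_num) hN₀.le)
          _ = B := by rw [hB]; ring
      · simp only [hF, indicator_of_notMem hin]
        simpa using hB0
    · exact intervalIntegrable_const
    · -- pointwise convergence
      have hae : ∀ᵐ ζ : ℝ ∂volume, ζ ≠ α * θ₀ := by
        refine MeasureTheory.ae_iff.mpr ?_
        have : {a : ℝ | ¬a ≠ α * θ₀} = {α * θ₀} := by ext x; simp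
        rw [this]
        exact Real.volume_singleton
      filter_upwards [hae] with ζ hζne hζmem
      rw [uIoc_of_le hα.le] at hζmem
      rcases lt_or_gt_of_ne hζne with hlt | hgt
      · -- ζ < α θ₀ : eventually the indicator is 0
        have hev : ∀ᶠ θ in 𝓝 θ₀, ζ < α * θ := by
          have hcont : Tendsto (fun θ : ℝ => α * θ) (𝓝 θ₀) (𝓝 (α * θ₀)) :=
            (continuous_const.mul continuous_id).tendsto θ₀
          exact hcont.eventually (eventually_gt_nhds hlt)
        have h0 : F θ₀ ζ = 0 := by
          rw [hF]
          exact indicator_of_notMem (fun h => absurd h.1 (not_lt.mpr hlt.le)) _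
        rw [h0]
        apply Tendsto.congr' _ tendsto_const_nhds
        filter_upwards [hev] with θ hθ
        rw [hF]
        exact (indicator_of_notMem (fun h => absurd h.1 (not_lt.mpr hθ.le)) _).symm
      · -- ζ > α θ₀ : eventually the indicator is f θ ζ, continuous in θ
        have hζα : ζ ≤ α := hζmem.2
        have hζ0 : 0 < ζ := hζmem.1
        have hev : ∀ᶠ θ in 𝓝 θ₀, α * θ < ζ := by
          have hcont : Tendsto (fun θ : ℝ => α * θ) (𝓝 θ₀) (𝓝 (α * θ₀)) :=
            (continuous_const.mul continuous_id).tendsto θ₀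
          exact hcont.eventually (eventually_lt_nhds hgt)
        have hmemIoc : ζ ∈ Ioc (α * θ₀) α := ⟨hgt, hζα⟩
        have h0 : F θ₀ ζ = f θ₀ ζ := by
          rw [hF]
          exact indicator_of_mem hmemIoc _
        rw [h0]
        have hspos : 0 < ζ ^ 2 - α ^ 2 * (ε * θ₀) ^ 2 := by
          rw [hee θ₀]
          have h1 : (0:ℝ) ≤ α * θ₀ := (mul_pos hα hθ₀0).le
          have h2 : (α * θ₀) ^ 2 < ζ ^ 2 := by
            apply pow_lt_pow_left₀ hgt h1
            norm_num
          linarith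
        have hc : ContinuousAt (fun θ => f θ ζ) θ₀ := by
          simp only [hf]
          apply ContinuousAt.mul
          apply ContinuousAt.mul
          · apply ContinuousAt.div continuousAt_const
            · exact (Real.continuous_sqrt.continuousAt).comp (by fun_prop)
            · exact ne_of_gt (Real.sqrt_pos.mpr hspos)
          · apply (Real.continuous_exp.continuousAt).comp
            apply ContinuousAt.div (by fun_prop) (by fun_prop)
            exact ne_of_gt (by linarith [hspos])
          · exact continuousAt_const
        apply Tendsto.congr' _ hc
        filter_upwards [hev] with θ hθ
        have hmem2 : ζ ∈ Ioc (α * θ) α := ⟨hθ, hζα⟩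
        rw [hF]
        exact (indicator_of_mem hmem2 _).symm
  -- conclude
  have hval : kernelG α (fun ζ => ζ ^ κ * m ζ) (ε * θ₀)
      = (α / Real.sqrt Real.pi) * ∫ ζ in (0:ℝ)..α, F θ₀ ζ := hFeq θ₀ ⟨hθ₀0, hθ₀1⟩
  rw [ContinuousAt, hval]
  apply Tendsto.congr' _ (hFtendsto.const_mul (α / Real.sqrt Real.pi))
  filter_upwards [isOpen_Ioo.mem_nhds (⟨hθ₀0, hθ₀1⟩ : θ₀ ∈ Ioo (0:ℝ) 1)] with θ hθ
  exact (hFeq θ hθ).symm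

/-- For Φ(ζ) = ζ^κ m(ζ) with κ > 1, θ(G(θ)+G(-θ)) → 0 as θ → 0⁺;
hence K(θ) = θ²(G(θ)+G(-θ)) extends continuously to [0,1) with K(0) = 0, and the
extension is differentiable at 0 with K'(0) = 0. -/
theorem kernelK_zero_and_deriv_zero
    (α κ : ℝ) (hα : 0 < α) (hκ : 1 < κ)
    (m : ℝ → ℝ) (hm : ContinuousOn m (Icc 0 α))
    (G Kex : ℝ → ℝ)
    (hG : G = kernelG α (fun ζ => ζ ^ κ * m ζ))
    (hKex : Kex = fun θ => if θ = 0 then 0 else θ ^ 2 * (G θ + G (-θ))) :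
    Tendsto (fun θ => θ * (G θ + G (-θ))) (nhdsWithin 0 (Ioi 0)) (nhds 0) ∧
    ContinuousOn Kex (Ico 0 1) ∧
    HasDerivWithinAt Kex 0 (Ici 0) 0 := by
  subst hG; subst hKex
  set Φ : ℝ → ℝ := fun ζ => ζ ^ κ * m ζ with hΦ
  obtain ⟨M, hM⟩ := isCompact_Icc.exists_bound_of_continuousOn hm
  have hM' : ∀ ζ ∈ Icc (0:ℝ) α, |m ζ| ≤ M := fun ζ h => hM ζ h
  have hM0 : 0 ≤ M := le_trans (abs_nonneg _) (hM' 0 ⟨le_refl _, hα.le⟩)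
  -- Part 1: the limit
  have hlim : Tendsto (fun θ => θ * (kernelG α Φ θ + kernelG α Φ (-θ)))
      (𝓝[>] (0:ℝ)) (𝓝 0) := by
    set C : ℝ := 2 * (α / Real.sqrt Real.pi) * M * α ^ (κ - 2) with hC
    have hC0 : 0 ≤ C := by
      have := Real.rpow_nonneg hα.le (κ - 2)
      rw [hC]; positivity
    have t1 : Tendsto (fun θ : ℝ => Real.log θ * θ ^ (κ - 1)) (𝓝[>] (0:ℝ)) (𝓝 0) :=
      tendsto_log_mul_rpow_nhdsGT_zero (by linarith)
    have t2 : Tendsto (fun θ : ℝ => Real.log θ * θ) (𝓝[>] (0:ℝ)) (𝓝 0) := by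
      have := tendsto_log_mul_rpow_nhdsGT_zero (zero_lt_one (α := ℝ))
      simpa [Real.rpow_one] using this
    have t3 : Tendsto (fun θ : ℝ => θ ^ (κ - 1)) (𝓝[>] (0:ℝ)) (𝓝 0) := by
      have h := (Real.continuousAt_rpow_const 0 (κ - 1) (Or.inr (by linarith))).tendsto
      rw [Real.zero_rpow (by linarith : κ - 1 ≠ 0)] at h
      exact h.mono_left nhdsWithin_le_nhds
    have t4 : Tendsto (fun θ : ℝ => θ) (𝓝[>] (0:ℝ)) (𝓝 0) :=
      tendsto_id.mono_left nhdsWithin_le_nhds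
    have hg : Tendsto (fun θ : ℝ => C * (Real.log 2 * θ ^ (κ - 1) + Real.log 2 * θ
        - Real.log θ * θ ^ (κ - 1) - Real.log θ * θ)) (𝓝[>] (0:ℝ)) (𝓝 0) := by
      have := ((((t3.const_mul (Real.log 2)).add (t4.const_mul (Real.log 2))).sub t1).sub
        t2).const_mul C
      simpa using this
    apply squeeze_zero_norm' _ hg
    filter_upwards [Ioo_mem_nhdsGT_of_mem
      (⟨le_refl (0:ℝ), zero_lt_one⟩ : (0:ℝ) ∈ Ico (0:ℝ) 1)] with θ hθ
    have hθ0 : 0 < θ := hθ.1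
    have b1 := kernelG_abs_le α κ M hα m hM' hθ (abs_of_pos hθ0)
    have b2 := kernelG_abs_le α κ M hα m hM' hθ (by rw [abs_neg, abs_of_pos hθ0])
    have e1 : (α * θ) ^ (κ - 2) = α ^ (κ - 2) * θ ^ (κ - 2) :=
      Real.mul_rpow hα.le hθ0.le
    have e2 : Real.log (2 * α) = Real.log 2 + Real.log α :=
      Real.log_mul two_ne_zero hα.ne'
    have e3 : Real.log (α * θ) = Real.log α + Real.log θ :=
      Real.log_mul hα.ne' hθ0.ne'
    have e4 : θ ^ (κ - 1) = θ ^ (κ - 2) * θ := by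
      rw [show κ - 1 = κ - 2 + 1 by ring, Real.rpow_add_one hθ0.ne']
    calc ‖θ * (kernelG α Φ θ + kernelG α Φ (-θ))‖
        = θ * |kernelG α Φ θ + kernelG α Φ (-θ)| := by
          rw [Real.norm_eq_abs, abs_mul, abs_of_pos hθ0]
      _ ≤ θ * (|kernelG α Φ θ| + |kernelG α Φ (-θ)|) :=
          mul_le_mul_of_nonneg_left (abs_add_le _ _) hθ0.le
      _ ≤ θ * ((α / Real.sqrt Real.pi) * ((M * ((α * θ) ^ (κ - 2) + α ^ (κ - 2))) *
            (Real.log (2 * α) - Real.log (α * θ)))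
          + (α / Real.sqrt Real.pi) * ((M * ((α * θ) ^ (κ - 2) + α ^ (κ - 2))) *
            (Real.log (2 * α) - Real.log (α * θ)))) := by
          apply mul_le_mul_of_nonneg_left _ hθ0.le
          exact add_le_add b1 b2
      _ = C * (Real.log 2 * θ ^ (κ - 1) + Real.log 2 * θ
          - Real.log θ * θ ^ (κ - 1) - Real.log θ * θ) := by
          rw [e1, e2, e3, e4, hC]; ring
  refine ⟨hlim, ?_, ?_⟩
  · -- Part 2: continuity on [0,1)
    intro θ₀ hθ₀
    rcases eq_or_lt_of_le hθ₀.1 with h0 | hpos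
    · -- at θ₀ = 0
      subst h0
      have hKex0 : (if (0:ℝ) = 0 then (0:ℝ) else 0 ^ 2 * (kernelG α Φ 0 + kernelG α Φ (-0)))
          = 0 := if_pos rfl
      rw [ContinuousWithinAt]
      rw [show (if (0:ℝ) = 0 then (0:ℝ) else (0:ℝ) ^ 2 * (kernelG α Φ 0 + kernelG α Φ (-0)))
        = 0 from if_pos rfl]
      have h1 : Tendsto (fun θ => if θ = 0 then (0:ℝ)
          else θ ^ 2 * (kernelG α Φ θ + kernelG α Φ (-θ))) (𝓝[>] (0:ℝ)) (𝓝 0) := by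
        have ht : Tendsto (fun θ : ℝ => θ * (θ * (kernelG α Φ θ + kernelG α Φ (-θ))))
            (𝓝[>] (0:ℝ)) (𝓝 0) := by
          have := (tendsto_id.mono_left nhdsWithin_le_nhds :
            Tendsto (fun θ : ℝ => θ) (𝓝[>] (0:ℝ)) (𝓝 0)).mul hlim
          simpa using this
        apply Tendsto.congr' _ ht
        filter_upwards [self_mem_nhdsWithin] with θ hθ
        rw [if_neg (ne_of_gt hθ)]
        ring
      have hsub : Ico (0:ℝ) 1 ⊆ {0} ∪ Ioi 0 := by
        intro x hx
        rcases eq_or_lt_of_le hx.1 with h | h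
        · exact Or.inl (by simp [← h])
        · exact Or.inr h
      apply Tendsto.mono_left _ (nhdsWithin_mono 0 hsub)
      rw [nhdsWithin_union, nhdsWithin_singleton]
      rw [Filter.tendsto_sup]
      constructor
      · have := tendsto_pure_nhds (fun θ : ℝ => if θ = 0 then (0:ℝ)
          else θ ^ 2 * (kernelG α Φ θ + kernelG α Φ (-θ))) 0
        simpa using this
      · exact h1
    · -- at θ₀ ∈ (0,1)
      have hθ₀' : θ₀ ∈ Ioo (0:ℝ) 1 := ⟨hpos, hθ₀.2⟩
      have c1 := kernelG_comp_continuousAt α κ hα m hm (Or.inl rfl) hθ₀'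
      have c2 := kernelG_comp_continuousAt α κ hα m hm (Or.inr rfl) hθ₀'
      simp only [one_mul] at c1
      simp only [neg_one_mul] at c2
      have hGc : ContinuousAt (fun θ => θ ^ 2 * (kernelG α Φ θ + kernelG α Φ (-θ))) θ₀ :=
        (continuous_pow 2).continuousAt.mul (c1.add c2)
      have heq : (fun θ => θ ^ 2 * (kernelG α Φ θ + kernelG α Φ (-θ)))
          =ᶠ[𝓝 θ₀] (fun θ => if θ = 0 then (0:ℝ)
            else θ ^ 2 * (kernelG α Φ θ + kernelG α Φ (-θ))) := by
        filter_upwards [compl_singleton_mem_nhds hpos.ne'] with θ hθ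
        have hθ' : θ ≠ 0 := hθ
        rw [if_neg hθ']
      exact (hGc.congr heq).continuousWithinAt
  · -- Part 3: derivative at 0
    rw [hasDerivWithinAt_iff_tendsto_slope]
    rw [Set.Ici_sdiff_left]
    apply Tendsto.congr' _ hlim
    filter_upwards [self_mem_nhdsWithin] with θ hθ
    have hθ0 : (0:ℝ) < θ := hθ
    rw [slope_def_field]
    rw [if_neg hθ0.ne', if_pos rfl]
    rw [sub_zero, sub_zero]
    rw [eq_comm, div_eq_iff hθ0.ne']
    ring
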